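/- Let K, δ, c > 0 with K ≠ δ, let T > 0, and let S : [0,T] → ℝ be continuous with 0 ≤ S(t) ≤ K ∫₀ᵗ e^{−δ(t−τ)} (S(τ) + c) dτ for all t ∈ [0,T]. Then S(t) ≤ (Kc/(K − δ)) (e^{(K−δ)t} − 1) for all t ∈ [0,T]; in particular, if K < δ then S(t) ≤ (Kc/(δ − K))(1 − e^{−(δ−K)t}) ≤ Kc/(δ − K), a bound uniform in t. -/

import Mathlib

open Set intervalIntegral MeasureTheory


/-- Gronwall-type estimate. Let K, δ, c > 0 with K ≠ δ, T > 0, and let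
S : [0,T] → ℝ be continuous with 0 ≤ S(t) ≤ K ∫₀ᵗ e^{−δ(t−τ)}(S(τ) + c) dτ on [0,T].
Then S(t) ≤ (Kc/(K−δ))(e^{(K−δ)t} − 1) on [0,T]; in particular if K < δ then
S(t) ≤ (Kc/(δ−K))(1 − e^{−(δ−K)t}) ≤ Kc/(δ−K). -/
theorem stmt17 (K δ c T : ℝ) (hK : 0 < K) (hδ : 0 < δ) (hc : 0 < c) (hKδ : K ≠ δ)
    (hT : 0 < T) (S : ℝ → ℝ) (hS : ContinuousOn S (Set.Icc 0 T))
    (hpos : ∀ t ∈ Set.Icc (0 : ℝ) T, 0 ≤ S t)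
    (hbd : ∀ t ∈ Set.Icc (0 : ℝ) T,
      S t ≤ K * ∫ τ in (0 : ℝ)..t, Real.exp (-δ * (t - τ)) * (S τ + c)) :
    ∀ t ∈ Set.Icc (0 : ℝ) T,
      S t ≤ (K * c / (K - δ)) * (Real.exp ((K - δ) * t) - 1) ∧
      (K < δ →
        S t ≤ (K * c / (δ - K)) * (1 - Real.exp (-(δ - K) * t)) ∧
        S t ≤ K * c / (δ - K)) := by
  have hδK : δ - K ≠ 0 := sub_ne_zero.mpr (Ne.symm hKδ)
  have hKδ' : K - δ ≠ 0 := sub_ne_zero.mpr hKδ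
  set f : ℝ → ℝ := fun τ => Real.exp (δ * τ) * (S τ + c) with hf
  have hfc : ContinuousOn f (Icc 0 T) := by
    apply ContinuousOn.mul
    · exact (Real.continuous_exp.comp (continuous_const.mul continuous_id)).continuousOn
    · exact hS.add continuousOn_const
  set F : ℝ → ℝ := fun t => ∫ τ in (0:ℝ)..t, f τ with hF
  -- rewrite hbd
  have hbd' : ∀ t ∈ Icc (0:ℝ) T, S t ≤ K * (Real.exp (-δ * t) * F t) := by
    intro t ht
    have := hbd t ht
    rwa [show (∫ τ in (0:ℝ)..t, Real.exp (-δ * (t - τ)) * (S τ + c))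
        = Real.exp (-δ * t) * F t from ?_] at this
    rw [hF, ← intervalIntegral.integral_const_mul]
    apply intervalIntegral.integral_congr
    intro τ _
    simp only [hf]
    rw [← mul_assoc, ← Real.exp_add]
    ring_nf
  -- integrability of f on subintervals
  have hint : ∀ t ∈ Icc (0:ℝ) T, IntervalIntegrable f volume 0 t := by
    intro t ht
    apply ContinuousOn.intervalIntegrable
    rw [uIcc_of_le ht.1]
    exact hfc.mono (Icc_subset_Icc le_rfl ht.2)
  -- derivative of F on Ioo
  have hFd : ∀ t ∈ Ioo (0:ℝ) T, HasDerivAt F (f t) t := by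
    intro t ht
    have hmeas : StronglyMeasurableAtFilter f (nhds t) volume :=
      (hfc.mono Ioo_subset_Icc_self).stronglyMeasurableAtFilter isOpen_Ioo t ht
    have hca : ContinuousAt f t :=
      hfc.continuousAt (Icc_mem_nhds ht.1 ht.2)
    exact intervalIntegral.integral_hasDerivAt_right
      (hint t (Ioo_subset_Icc_self ht)) hmeas hca
  -- continuity of F on Icc
  have hFc : ContinuousOn F (Icc 0 T) := by
    have : IntegrableOn f (uIcc 0 T) volume := by
      rw [uIcc_of_le hT.le]
      exact hfc.integrableOn_Icc
    have := intervalIntegral.continuousOn_primitive_interval (μ := volume) this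
    rwa [uIcc_of_le hT.le] at this
  -- auxiliary function w
  set w : ℝ → ℝ := fun t =>
    Real.exp (-K * t) * F t - c * (Real.exp ((δ - K) * t) - 1) / (δ - K) with hw
  have hwd : ∀ t ∈ Ioo (0:ℝ) T, HasDerivAt w
      (-K * Real.exp (-K * t) * F t + Real.exp (-K * t) * f t
        - c * Real.exp ((δ - K) * t)) t := by
    intro t ht
    have h1 : HasDerivAt (fun t => Real.exp (-K * t)) (-K * Real.exp (-K * t)) t := by
      simpa [mul_comm] using ((hasDerivAt_id t).const_mul (-K)).exp
    have h2 : HasDerivAt (fun t => Real.exp ((δ - K) * t)) ((δ - K) * Real.exp ((δ - K) * t)) t := by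
      simpa [mul_comm] using ((hasDerivAt_id t).const_mul (δ - K)).exp
    have h3 := (h1.mul (hFd t ht)).sub
      ((((h2.sub_const 1).const_mul c).div_const (δ - K)))
    convert h3 using 1
    · rfl
    · rfl
    · rfl
    field_simp
  have hwderiv : ∀ t ∈ Ioo (0:ℝ) T, deriv w t ≤ 0 := by
    intro t ht
    rw [(hwd t ht).deriv]
    have hb := hbd' t (Ioo_subset_Icc_self ht)
    have hexp : Real.exp (-K * t) * f t - c * Real.exp ((δ - K) * t)
        = Real.exp (-K * t) * Real.exp (δ * t) * S t := by
      simp only [hf]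
      rw [show (δ - K) * t = -K * t + δ * t by ring, Real.exp_add]
      ring
    have key : Real.exp (-K * t) * Real.exp (δ * t) * S t
        ≤ K * Real.exp (-K * t) * F t := by
      calc Real.exp (-K * t) * Real.exp (δ * t) * S t
          ≤ Real.exp (-K * t) * Real.exp (δ * t) * (K * (Real.exp (-δ * t) * F t)) := by
            apply mul_le_mul_of_nonneg_left hb
            positivity
        _ = K * Real.exp (-K * t) * F t := by
            rw [show Real.exp (-K*t) * Real.exp (δ*t) * (K * (Real.exp (-δ*t) * F t))
              = K * Real.exp (-K*t) * (Real.exp (δ*t) * Real.exp (-δ*t)) * F t by ring,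
              ← Real.exp_add]
            simp
    nlinarith [key, hexp]
  have hwcont : ContinuousOn w (Icc 0 T) := by
    apply ContinuousOn.sub
    · exact ((Real.continuous_exp.comp (continuous_const.mul continuous_id)).continuousOn).mul hFc
    · exact ContinuousOn.div_const (continuousOn_const.mul
        (((Real.continuous_exp.comp (continuous_const.mul continuous_id)).continuousOn).sub
          continuousOn_const)) _
  have hwdiff : DifferentiableOn ℝ w (interior (Icc (0:ℝ) T)) := by
    rw [interior_Icc]
    intro t ht
    exact (hwd t ht).differentiableAt.differentiableWithinAt
  have hanti : AntitoneOn w (Icc 0 T) := by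
    apply antitoneOn_of_deriv_nonpos (convex_Icc 0 T) hwcont hwdiff
    intro t ht
    rw [interior_Icc] at ht
    exact hwderiv t ht
  have hw0 : w 0 = 0 := by simp [hw, hF]
  -- main bound
  intro t ht
  have hwt : w t ≤ 0 := by
    rw [← hw0]
    exact hanti (left_mem_Icc.mpr hT.le) ht ht.1
  have hFt : Real.exp (-K * t) * F t ≤ c * (Real.exp ((δ - K) * t) - 1) / (δ - K) := by
    simpa [hw, sub_nonpos] using hwt
  have hSt : S t ≤ K * (Real.exp (-δ * t) * F t) := hbd' t ht
  have hmain : S t ≤ (K * c / (K - δ)) * (Real.exp ((K - δ) * t) - 1) := by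
    have hekt : (0:ℝ) < Real.exp (-K * t) := Real.exp_pos _
    have hF' : F t ≤ Real.exp (K * t) * (c * (Real.exp ((δ - K) * t) - 1) / (δ - K)) := by
      have h := mul_le_mul_of_nonneg_left hFt (Real.exp_pos (K * t)).le
      rwa [← mul_assoc, ← Real.exp_add, show K * t + -K * t = 0 by ring, Real.exp_zero,
        one_mul] at h
    calc S t ≤ K * (Real.exp (-δ * t) * F t) := hSt
      _ ≤ K * (Real.exp (-δ * t) * (Real.exp (K * t) * (c * (Real.exp ((δ - K) * t) - 1) / (δ - K)))) := by
          apply mul_le_mul_of_nonneg_left _ hK.le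
          exact mul_le_mul_of_nonneg_left hF' (Real.exp_pos _).le
      _ = (K * c / (K - δ)) * (Real.exp ((K - δ) * t) - 1) := by
          rw [show Real.exp (-δ * t) * (Real.exp (K*t) * (c * (Real.exp ((δ - K) * t) - 1) / (δ - K)))
            = (Real.exp (-δ * t) * Real.exp (K*t)) * (c * (Real.exp ((δ - K) * t) - 1) / (δ - K)) by ring,
            ← Real.exp_add]
          have h1 : -δ * t + K * t = (K - δ) * t := by ring
          rw [h1]
          have h2 : Real.exp ((K - δ) * t) * Real.exp ((δ - K) * t) = 1 := by
            rw [← Real.exp_add, show (K - δ) * t + (δ - K) * t = 0 by ring, Real.exp_zero]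
          rw [show δ - K = -(K - δ) by ring, div_neg,
            show -(K - δ) * t = (δ - K) * t by ring]
          linear_combination (-(K * c / (K - δ))) * h2
  refine ⟨hmain, fun hlt => ?_⟩
  have heq : (K * c / (K - δ)) * (Real.exp ((K - δ) * t) - 1)
      = (K * c / (δ - K)) * (1 - Real.exp (-(δ - K) * t)) := by
    rw [show -(δ - K) * t = (K - δ) * t by ring]
    field_simp
    ring
  have h2 : S t ≤ (K * c / (δ - K)) * (1 - Real.exp (-(δ - K) * t)) := heq ▸ hmain
  refine ⟨h2, h2.trans ?_⟩
  have hx : (0:ℝ) < K * c / (δ - K) := by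
    apply div_pos (mul_pos hK hc); linarith
  nlinarith [Real.exp_pos (-(δ - K) * t), hx]
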